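/- Let σ be C², 2π-periodic. Define the Epstein map Ep(θ) = ((σ_θ² + e^{2σ} − 1)/(σ_θ² + (e^σ+1)²))·e^{iθ} + (2σ_θ/(σ_θ² + (e^σ+1)²))·i e^{iθ} and the normal Ñ(θ) = (2e^σ(σ_θ² − (e^σ+1)²)/(σ_θ² + (e^σ+1)²)²)·e^{iθ} + (4σ_θ e^σ(e^σ+1)/(σ_θ² + (e^σ+1)²)²)·i e^{iθ} (a tangent vector at Ep(θ) in the disk model). Then the derivative of Ep satisfies ∂_θ Ep(θ) = −i·Ñ(θ)·(e^{-σ}(σ_θθ − σ_θ²/2) + sinh(σ)), as an identity of complex-valued functions of θ (identifying tangent vectors with complex numbers). -/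

import Mathlib

open Complex

/-- The Epstein map of the metric `e^σ dθ` on the unit circle, in the Poincaré disk. -/
noncomputable def epsteinMap (σ : ℝ → ℝ) (θ : ℝ) : ℂ :=
  ((((deriv σ θ) ^ 2 + Real.exp (2 * σ θ) - 1)
      / ((deriv σ θ) ^ 2 + (Real.exp (σ θ) + 1) ^ 2) : ℝ) : ℂ) * Complex.exp (θ * I)
    + (((2 * deriv σ θ)
      / ((deriv σ θ) ^ 2 + (Real.exp (σ θ) + 1) ^ 2) : ℝ) : ℂ) * (I * Complex.exp (θ * I))

/-- The unit normal of the Epstein map, as a (Euclidean) tangent vector in the disk model. -/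
noncomputable def epsteinNormal (σ : ℝ → ℝ) (θ : ℝ) : ℂ :=
  (((2 * Real.exp (σ θ) * ((deriv σ θ) ^ 2 - (Real.exp (σ θ) + 1) ^ 2))
      / ((deriv σ θ) ^ 2 + (Real.exp (σ θ) + 1) ^ 2) ^ 2 : ℝ) : ℂ) * Complex.exp (θ * I)
    + (((4 * deriv σ θ * Real.exp (σ θ) * (Real.exp (σ θ) + 1))
      / ((deriv σ θ) ^ 2 + (Real.exp (σ θ) + 1) ^ 2) ^ 2 : ℝ) : ℂ)
        * (I * Complex.exp (θ * I))

/-- The tangent of the Epstein curve: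
`∂_θ Ep(θ) = −i·Ñ(θ)·(e^{−σ}(σ_θθ − σ_θ²/2) + sinh σ)`. -/
theorem epstein_tangent (σ : ℝ → ℝ) (hσ : ContDiff ℝ 2 σ)
    (hper : Function.Periodic σ (2 * Real.pi)) (θ : ℝ) :
    deriv (epsteinMap σ) θ
      = -I * epsteinNormal σ θ
          * ((Real.exp (-σ θ) * (deriv (deriv σ) θ - (deriv σ θ) ^ 2 / 2)
              + Real.sinh (σ θ) : ℝ) : ℂ) := by
  have h1 : ContDiff ℝ 1 (deriv σ) :=
    (contDiff_succ_iff_deriv.mp (show ContDiff ℝ (1+1) σ by norm_num; exact hσ)).2.2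
  have hdσ : Differentiable ℝ σ := hσ.differentiable (by norm_num)
  have hd : HasDerivAt σ (deriv σ θ) θ := (hdσ θ).hasDerivAt
  have hd' : HasDerivAt (deriv σ) (deriv (deriv σ) θ) θ :=
    ((h1.differentiable one_ne_zero) θ).hasDerivAt
  set u := deriv σ θ with hu
  set u' := deriv (deriv σ) θ with hu'
  set E := Real.exp (σ θ) with hEdef
  have hEpos : (0:ℝ) < E := Real.exp_pos _
  have hDpos : (0:ℝ) < u ^ 2 + (E + 1) ^ 2 := by positivity
  set D := u ^ 2 + (E + 1) ^ 2 with hDdef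
  set D' := 2 * u * u' + 2 * (E + 1) * (E * u) with hD'def
  -- derivative of the squared-derivative term
  have hu2 : HasDerivAt (fun x => (deriv σ x) ^ 2) (2 * u * u') θ := by
    have := hd'.pow 2
    norm_num at this
    exact this
  -- derivative of exp σ
  have hexpσ : HasDerivAt (fun x => Real.exp (σ x)) (E * u) θ := hd.exp
  -- derivative of exp (2σ)
  have hexp2 : HasDerivAt (fun x => Real.exp (2 * σ x)) (E * E * (2 * u)) θ := by
    have := (hd.const_mul 2).exp
    convert this using 1
    rw [show (2:ℝ) * σ θ = σ θ + σ θ by ring, Real.exp_add]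
  -- derivative of the denominator
  have hDen : HasDerivAt (fun x => (deriv σ x) ^ 2 + (Real.exp (σ x) + 1) ^ 2) D' θ := by
    have h2 : HasDerivAt (fun x => (Real.exp (σ x) + 1) ^ 2)
        (2 * (E + 1) * (E * u)) θ := by
      have := (hexpσ.add_const 1).pow 2
      norm_num at this
      exact this
    exact hu2.add h2
  -- derivative of numerator a
  have hNa : HasDerivAt (fun x => (deriv σ x) ^ 2 + Real.exp (2 * σ x) - 1)
      (2 * u * u' + E * E * (2 * u)) θ := (hu2.add hexp2).sub_const 1
  -- quotient a
  have ha : HasDerivAt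
      (fun x => ((deriv σ x) ^ 2 + Real.exp (2 * σ x) - 1)
        / ((deriv σ x) ^ 2 + (Real.exp (σ x) + 1) ^ 2))
      (((2 * u * u' + E * E * (2 * u)) * D - (u ^ 2 + Real.exp (2 * σ θ) - 1) * D') / D ^ 2)
      θ := hNa.div hDen hDpos.ne'
  -- quotient b
  have hb : HasDerivAt
      (fun x => (2 * deriv σ x) / ((deriv σ x) ^ 2 + (Real.exp (σ x) + 1) ^ 2))
      ((2 * u' * D - 2 * u * D') / D ^ 2) θ := (hd'.const_mul 2).div hDen hDpos.ne'
  -- complex exponential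
  have he : HasDerivAt (fun x : ℝ => Complex.exp (x * I)) (I * Complex.exp (θ * I)) θ := by
    have h0 : HasDerivAt (fun x : ℝ => (x : ℂ) * I) I θ := by
      simpa using ((hasDerivAt_id θ).ofReal_comp.mul_const I)
    simpa [mul_comm] using h0.cexp
  have heI : HasDerivAt (fun x : ℝ => I * Complex.exp (x * I))
      (I * (I * Complex.exp (θ * I))) θ := he.const_mul I
  -- assemble the derivative of the Epstein map
  have hEp : HasDerivAt (epsteinMap σ)
      (((((2 * u * u' + E * E * (2 * u)) * D - (u ^ 2 + Real.exp (2 * σ θ) - 1) * D') / D ^ 2 : ℝ) : ℂ)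
          * Complex.exp (θ * I)
        + (((u ^ 2 + Real.exp (2 * σ θ) - 1) / D : ℝ) : ℂ) * (I * Complex.exp (θ * I))
        + ((((2 * u' * D - 2 * u * D') / D ^ 2 : ℝ) : ℂ) * (I * Complex.exp (θ * I))
          + ((2 * u / D : ℝ) : ℂ) * (I * (I * Complex.exp (θ * I))))) θ := by
    have := (ha.ofReal_comp.mul he).add (hb.ofReal_comp.mul heI)
    exact this
  have hderiv := hEp.deriv
  rw [hderiv]
  -- the real identities
  have hexp2θ : Real.exp (2 * σ θ) = E * E := by
    rw [show (2:ℝ) * σ θ = σ θ + σ θ by ring, Real.exp_add]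
  have hexpneg : Real.exp (-σ θ) = E⁻¹ := Real.exp_neg _
  have hsinh : Real.sinh (σ θ) = (E - E⁻¹) / 2 := by
    rw [Real.sinh_eq, Real.exp_neg]
  set k : ℝ := Real.exp (-σ θ) * (u' - u ^ 2 / 2) + Real.sinh (σ θ) with hk
  have key1 : ((2 * u * u' + E * E * (2 * u)) * D - (u ^ 2 + Real.exp (2 * σ θ) - 1) * D') / D ^ 2
      - 2 * u / D = (4 * u * E * (E + 1)) / D ^ 2 * k := by
    rw [hk, hexp2θ, hexpneg, hsinh, hDdef, hD'def]
    field_simp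
    ring
  have key2 : (2 * u' * D - 2 * u * D') / D ^ 2 + (u ^ 2 + Real.exp (2 * σ θ) - 1) / D
      = -((2 * E * (u ^ 2 - (E + 1) ^ 2)) / D ^ 2 * k) := by
    rw [hk, hexp2θ, hexpneg, hsinh, hDdef, hD'def]
    field_simp
    ring
  have c1 : ((((2 * u * u' + E * E * (2 * u)) * D - (u ^ 2 + Real.exp (2 * σ θ) - 1) * D') / D ^ 2 : ℝ) : ℂ)
      - ((2 * u / D : ℝ) : ℂ) = (((4 * u * E * (E + 1)) / D ^ 2 : ℝ) : ℂ) * ((k : ℝ) : ℂ) := by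
    exact_mod_cast congrArg (Complex.ofReal) key1
  have c2 : (((2 * u' * D - 2 * u * D') / D ^ 2 : ℝ) : ℂ)
      + (((u ^ 2 + Real.exp (2 * σ θ) - 1) / D : ℝ) : ℂ)
      = -((((2 * E * (u ^ 2 - (E + 1) ^ 2)) / D ^ 2 : ℝ) : ℂ) * ((k : ℝ) : ℂ)) := by
    exact_mod_cast congrArg (Complex.ofReal) key2
  rw [epsteinNormal]
  linear_combination Complex.exp (θ * I) * c1 + (I * Complex.exp (θ * I)) * c2
    + ((((2 * u / D : ℝ) : ℂ) + (((4 * u * E * (E + 1)) / D ^ 2 : ℝ) : ℂ) * ((k:ℝ):ℂ))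
        * Complex.exp (θ * I)) * Complex.I_sq
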